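/- Let E be a reflexive Banach space and J : E → E* a bounded linear map that is injective and antisymmetric (i.e., (Ju)(v) = -(Jv)(u) for all u, v ∈ E). Then the range of J is dense in E*. -/

import Mathlib

/-- If `E` is a reflexive Banach space and `J : E → E*` is a bounded linear map that is
injective and antisymmetric, then the range of `J` is dense in `E*`. -/
theorem stmt3 {E : Type*} [NormedAddCommGroup E] [NormedSpace ℝ E] [CompleteSpace E]
    (hrefl : Function.Surjective (NormedSpace.inclusionInDoubleDual ℝ E))
    (J : E →L[ℝ] StrongDual ℝ E)
    (hinj : Function.Injective J)
    (hanti : ∀ u v : E, J u v = - J v u) :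
    Dense (Set.range fun u : E => J u) := by
  set R : Submodule ℝ (StrongDual ℝ E) :=
    LinearMap.range (J : E →ₗ[ℝ] StrongDual ℝ E) with hR
  have hrange : (Set.range fun u : E => J u) = (R : Set (StrongDual ℝ E)) := by
    ext φ; simp [hR]
  rw [hrange]
  by_contra hdense
  -- the closure of the range is a proper closed subspace
  have hne : R.topologicalClosure ≠ ⊤ := by
    intro h
    exact hdense (Submodule.dense_iff_topologicalClosure_eq_top.mpr h)
  obtain ⟨x, hx⟩ : ∃ x, x ∉ R.topologicalClosure := by
    by_contra h
    push_neg at h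
    exact hne (Submodule.eq_top_iff'.mpr h)
  obtain ⟨f, u, hs, hxu⟩ :=
    geometric_hahn_banach_closed_point
      (R.topologicalClosure : Submodule ℝ (StrongDual ℝ E)).convex
      R.isClosed_topologicalClosure hx
  -- f vanishes on the closure
  have hf0 : ∀ a ∈ R.topologicalClosure, f a = 0 := by
    intro a ha
    by_contra h
    have h1 := hs (((u + 1) / f a) • a) (Submodule.smul_mem _ _ ha)
    rw [map_smul, smul_eq_mul, div_mul_cancel₀ _ h] at h1
    linarith
  have hu : 0 < u := by
    have := hs 0 (Submodule.zero_mem _)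
    simpa using this
  -- by reflexivity, f is evaluation at some w
  obtain ⟨w, hw⟩ := hrefl f
  have hJvw : ∀ v : E, J v w = 0 := by
    intro v
    have hmem : (J v : StrongDual ℝ E) ∈ R.topologicalClosure :=
      R.le_topologicalClosure ⟨v, rfl⟩
    have := hf0 _ hmem
    rwa [← hw, NormedSpace.dual_def] at this
  have hJw : J w = 0 := by
    ext v
    rw [hanti w v, hJvw v, neg_zero]
    rfl
  have hw0 : w = 0 := hinj (by rw [hJw, map_zero])
  have hfx : f x = 0 := by
    rw [← hw, NormedSpace.dual_def, hw0, map_zero]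
  linarith
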